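/- Let f_A, f_R : [0,∞) → ℝ be continuous with f_A(ρ) < 0 for all ρ > 0, f_R ≥ 0, and f_R(ρ) > 0 for all ρ ∈ [0,d_a) for some d_a > 0. Let R ≥ 0 and r ≥ 0 with R + r > 0, and define H(R,r,χ) = ∫_{π/2}^{3π/2} (χ f_A + f_R)(w₃(φ,R,r)) (R+r)(1 − sin φ) w₂(φ,R,r) dφ for χ ∈ ℝ. Then H(R,r,·) is an affine, strictly decreasing function of χ with H(R,r,0) > 0, and if H(R,r,1) < 0 there exists a unique χ ∈ (0,1) with H(R,r,χ) = 0. -/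

import Mathlib

open Real

/-- `w₂(φ,R,r) = √(R² sin² φ + (R+r)² cos² φ)`. -/
noncomputable def w2 (φ R r : ℝ) : ℝ :=
  Real.sqrt (R ^ 2 * Real.sin φ ^ 2 + (R + r) ^ 2 * Real.cos φ ^ 2)

/-- `w₃(φ,R,r) = √(R² cos² φ + (R+r)²(1 − sin φ)²)`. -/
noncomputable def w3 (φ R r : ℝ) : ℝ :=
  Real.sqrt (R ^ 2 * Real.cos φ ^ 2 + (R + r) ^ 2 * (1 - Real.sin φ) ^ 2)

/-- `H(R,r,χ) = ∫_{π/2}^{3π/2} (χ f_A + f_R)(w₃(φ,R,r)) (R+r)(1 − sin φ) w₂(φ,R,r) dφ`. -/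
noncomputable def Hfun (fA fR : ℝ → ℝ) (R r χ : ℝ) : ℝ :=
  ∫ φ in (Real.pi / 2)..(3 * Real.pi / 2),
    (χ * fA (w3 φ R r) + fR (w3 φ R r)) * ((R + r) * (1 - Real.sin φ)) * w2 φ R r

lemma w2_continuous (R r : ℝ) : Continuous (fun φ => w2 φ R r) := by
  unfold w2; fun_prop

lemma w3_continuous (R r : ℝ) : Continuous (fun φ => w3 φ R r) := by
  unfold w3; fun_prop

lemma w3_nonneg (φ R r : ℝ) : 0 ≤ w3 φ R r := Real.sqrt_nonneg _

lemma w2_nonneg (φ R r : ℝ) : 0 ≤ w2 φ R r := Real.sqrt_nonneg _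

/-- For continuous `f_A` (negative on `(0,∞)`) and `f_R ≥ 0`
(positive on `[0,d_a)`), and `R, r ≥ 0` with `R + r > 0`, the function
`χ ↦ H(R,r,χ)` is affine and strictly decreasing, `H(R,r,0) > 0`, and if
`H(R,r,1) < 0` there is a unique `χ ∈ (0,1)` with `H(R,r,χ) = 0`. -/
theorem H_affine_strictAnti_unique_zero
    (fA fR : ℝ → ℝ)
    (hfA : ContinuousOn fA (Set.Ici 0)) (hfR : ContinuousOn fR (Set.Ici 0))
    (hfAneg : ∀ ρ : ℝ, 0 < ρ → fA ρ < 0)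
    (hfRnonneg : ∀ ρ ∈ Set.Ici (0:ℝ), 0 ≤ fR ρ)
    (da : ℝ) (hda : 0 < da)
    (hfRpos : ∀ ρ ∈ Set.Ico (0:ℝ) da, 0 < fR ρ)
    (R r : ℝ) (hR : 0 ≤ R) (hr : 0 ≤ r) (hRr : 0 < R + r) :
    (∃ a b : ℝ, a < 0 ∧ ∀ χ : ℝ, Hfun fA fR R r χ = a * χ + b)
      ∧ StrictAnti (fun χ => Hfun fA fR R r χ)
      ∧ 0 < Hfun fA fR R r 0
      ∧ (Hfun fA fR R r 1 < 0 →
          ∃! χ : ℝ, χ ∈ Set.Ioo (0:ℝ) 1 ∧ Hfun fA fR R r χ = 0) := by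
  have hπ : (0:ℝ) < Real.pi := Real.pi_pos
  have hab : Real.pi / 2 < 3 * Real.pi / 2 := by linarith
  set u : ℝ → ℝ := fun φ => fA (w3 φ R r) * ((R + r) * (1 - Real.sin φ)) * w2 φ R r with hu_def
  set v : ℝ → ℝ := fun φ => fR (w3 φ R r) * ((R + r) * (1 - Real.sin φ)) * w2 φ R r with hv_def
  -- continuity of composed maps
  have hmaps : ∀ φ : ℝ, w3 φ R r ∈ Set.Ici (0:ℝ) := fun φ => w3_nonneg φ R r
  have hcompA : Continuous (fun φ => fA (w3 φ R r)) := by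
    rw [← continuousOn_univ]
    exact hfA.comp (w3_continuous R r).continuousOn (fun φ _ => hmaps φ)
  have hcompR : Continuous (fun φ => fR (w3 φ R r)) := by
    rw [← continuousOn_univ]
    exact hfR.comp (w3_continuous R r).continuousOn (fun φ _ => hmaps φ)
  have hucont : Continuous u := by
    apply (hcompA.mul (by fun_prop)).mul (w2_continuous R r)
  have hvcont : Continuous v := by
    apply (hcompR.mul (by fun_prop)).mul (w2_continuous R r)
  have huint : ∀ a b : ℝ, IntervalIntegrable u MeasureTheory.volume a b :=
    fun a b => hucont.intervalIntegrable a b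
  have hvint : ∀ a b : ℝ, IntervalIntegrable v MeasureTheory.volume a b :=
    fun a b => hvcont.intervalIntegrable a b
  -- key pointwise facts on the interior
  have interior_facts : ∀ φ ∈ Set.Ioo (Real.pi / 2) (3 * Real.pi / 2),
      Real.sin φ < 1 ∧ 0 < w2 φ R r ∧ 0 < w3 φ R r := by
    intro φ hφ
    have hcos : Real.cos φ < 0 := by
      apply Real.cos_neg_of_pi_div_two_lt_of_lt hφ.1
      linarith [hφ.2]
    have hc2 : 0 < Real.cos φ ^ 2 := by nlinarith
    have hsin : Real.sin φ < 1 := by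
      nlinarith [Real.sin_sq_add_cos_sq φ, Real.neg_one_le_sin φ]
    refine ⟨hsin, ?_, ?_⟩
    · apply Real.sqrt_pos.mpr
      have : 0 < (R + r) ^ 2 * Real.cos φ ^ 2 := mul_pos (pow_pos hRr 2) hc2
      nlinarith [sq_nonneg (R * Real.sin φ)]
    · apply Real.sqrt_pos.mpr
      have : 0 < (R + r) ^ 2 * (1 - Real.sin φ) ^ 2 :=
        mul_pos (pow_pos hRr 2) (pow_pos (by linarith) 2)
      nlinarith [sq_nonneg (R * Real.cos φ)]
  -- v is nonneg everywhere on [π/2, 3π/2]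
  have hv_nonneg : ∀ φ : ℝ, 0 ≤ v φ := by
    intro φ
    have h1 : 0 ≤ fR (w3 φ R r) := hfRnonneg _ (hmaps φ)
    have h2 : 0 ≤ (R + r) * (1 - Real.sin φ) := by
      have := Real.sin_le_one φ
      nlinarith
    have := w2_nonneg φ R r
    positivity
  -- a := ∫ u < 0
  have ha_neg : (∫ φ in (Real.pi / 2)..(3 * Real.pi / 2), u φ) < 0 := by
    have hpos : 0 < ∫ φ in (Real.pi / 2)..(3 * Real.pi / 2), (-u) φ := by
      apply intervalIntegral.intervalIntegral_pos_of_pos_on ((huint _ _).neg)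
      · intro φ hφ
        obtain ⟨hsin, hw2, hw3⟩ := interior_facts φ hφ
        have hA : fA (w3 φ R r) < 0 := hfAneg _ hw3
        have h2 : 0 < (R + r) * (1 - Real.sin φ) := by nlinarith
        simp only [Pi.neg_apply, hu_def]
        nlinarith [mul_pos (mul_pos (neg_pos.mpr hA) h2) hw2]
      · exact hab
    have : (∫ φ in (Real.pi / 2)..(3 * Real.pi / 2), (-u) φ)
        = -∫ φ in (Real.pi / 2)..(3 * Real.pi / 2), u φ := by
      simp
    linarith [this ▸ hpos]
  -- b := ∫ v > 0
  have hW0 : w3 (Real.pi / 2) R r = 0 := by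
    simp [w3, Real.cos_pi_div_two, Real.sin_pi_div_two]
  have hopen : IsOpen {φ : ℝ | w3 φ R r < da} :=
    isOpen_lt (w3_continuous R r) continuous_const
  have hmem : (Real.pi / 2) ∈ {φ : ℝ | w3 φ R r < da} := by
    simp [hW0, hda]
  obtain ⟨δ, hδpos, hball⟩ := Metric.isOpen_iff.mp hopen _ hmem
  set c0 : ℝ := min (Real.pi / 2 + δ / 2) Real.pi with hc0_def
  have hc0_gt : Real.pi / 2 < c0 := by
    apply lt_min (by linarith) (by linarith)
  have hc0_lt : c0 < 3 * Real.pi / 2 := by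
    apply lt_of_le_of_lt (min_le_right _ _); linarith
  have hsmall : ∀ φ ∈ Set.Ioo (Real.pi / 2) c0, w3 φ R r < da := by
    intro φ hφ
    apply hball
    rw [Metric.mem_ball, Real.dist_eq, abs_of_nonneg (by linarith [hφ.1])]
    have := hφ.2
    have h2 : c0 ≤ Real.pi / 2 + δ / 2 := min_le_left _ _
    linarith
  have hb_pos : 0 < ∫ φ in (Real.pi / 2)..(3 * Real.pi / 2), v φ := by
    rw [← intervalIntegral.integral_add_adjacent_intervals (hvint (Real.pi / 2) c0)
      (hvint c0 (3 * Real.pi / 2))]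
    have h1 : 0 < ∫ φ in (Real.pi / 2)..c0, v φ := by
      apply intervalIntegral.intervalIntegral_pos_of_pos_on (hvint _ _) _ hc0_gt
      intro φ hφ
      have hφ' : φ ∈ Set.Ioo (Real.pi / 2) (3 * Real.pi / 2) :=
        ⟨hφ.1, lt_trans hφ.2 hc0_lt⟩
      obtain ⟨hsin, hw2, hw3⟩ := interior_facts φ hφ'
      have hRpos : 0 < fR (w3 φ R r) := hfRpos _ ⟨w3_nonneg φ R r, hsmall φ hφ⟩
      have h2 : 0 < (R + r) * (1 - Real.sin φ) := by nlinarith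
      simp only [hv_def]
      positivity
    have h2 : 0 ≤ ∫ φ in c0..(3 * Real.pi / 2), v φ :=
      intervalIntegral.integral_nonneg (le_of_lt hc0_lt) (fun φ _ => hv_nonneg φ)
    linarith
  -- affine structure
  set a : ℝ := ∫ φ in (Real.pi / 2)..(3 * Real.pi / 2), u φ with ha_def
  set b : ℝ := ∫ φ in (Real.pi / 2)..(3 * Real.pi / 2), v φ with hb_def
  have hH : ∀ χ : ℝ, Hfun fA fR R r χ = a * χ + b := by
    intro χ
    have heq : (fun φ => (χ * fA (w3 φ R r) + fR (w3 φ R r))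
          * ((R + r) * (1 - Real.sin φ)) * w2 φ R r)
        = fun φ => χ * u φ + v φ := by
      funext φ; simp only [hu_def, hv_def]; ring
    rw [Hfun, heq, intervalIntegral.integral_add ((huint _ _).const_mul χ) (hvint _ _),
      intervalIntegral.integral_const_mul, ← ha_def, ← hb_def]
    ring
  have hanti : StrictAnti (fun χ => Hfun fA fR R r χ) := by
    intro x y hxy
    simp only [hH]
    nlinarith
  refine ⟨⟨a, b, ha_neg, hH⟩, hanti, ?_, ?_⟩
  · rw [hH]; linarith
  · intro h1
    rw [hH] at h1
    have hane : a ≠ 0 := ne_of_lt ha_neg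
    have key : a * (b / -a) + b = 0 := by
      rw [div_neg, mul_neg, mul_div_assoc', mul_comm, mul_div_assoc, div_self hane]
      ring
    refine ⟨b / (-a), ⟨⟨?_, ?_⟩, ?_⟩, ?_⟩
    · exact div_pos hb_pos (by linarith)
    · rw [div_lt_one (by linarith)]; linarith
    · rw [hH]; exact key
    · rintro y ⟨-, hy⟩
      rw [hH] at hy
      exact mul_left_cancel₀ hane (by linarith)
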